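/- (Gaussian harmonic-oscillator protocol saturates the Landauer limit.) Let β > 0 and 0 < ω_S < ω_max. Define the mean occupation ē(ω) := e^{−βω}/(1 − e^{−βω}) and the thermal entropy S(ω) := β ω e^{−βω}/(1 − e^{−βω}) − log(1 − e^{−βω}). For each integer N ≥ 1 set ω_n := ω_S + n(ω_max − ω_S)/N for 0 ≤ n ≤ N. Then lim_{N→∞} ∑_{n=1}^{N} ω_n (ē(ω_{n−1}) − ē(ω_n)) = (1/β)(S(ω_S) − S(ω_max)). -/

import Mathlib

open Filter

/-- Mean occupation number of a thermal oscillator: `ē(ω) = e^{−βω}/(1 − e^{−βω})`. -/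
noncomputable def meanOcc (β ω : ℝ) : ℝ := Real.exp (-β * ω) / (1 - Real.exp (-β * ω))

/-- Thermal entropy of an oscillator:
`S(ω) = βω e^{−βω}/(1 − e^{−βω}) − log(1 − e^{−βω})`. -/
noncomputable def oscEntropy (β ω : ℝ) : ℝ :=
  β * ω * Real.exp (-β * ω) / (1 - Real.exp (-β * ω)) - Real.log (1 - Real.exp (-β * ω))

section Aux

private lemma exp_neg_lt_one {β : ℝ} (hβ : 0 < β) {ω : ℝ} (hω : 0 < ω) :
    Real.exp (-β * ω) < 1 := by
  rw [Real.exp_lt_one_iff]; nlinarith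

private lemma meanOcc_eq {β : ℝ} (hβ : 0 < β) {ω : ℝ} (hω : 0 < ω) :
    meanOcc β ω = (Real.exp (β * ω) - 1)⁻¹ := by
  have h1 : 1 < Real.exp (β * ω) := by rw [Real.one_lt_exp_iff]; positivity
  have h0 : Real.exp (β * ω) ≠ 0 := (Real.exp_pos _).ne'
  unfold meanOcc
  rw [show -β * ω = -(β * ω) by ring, Real.exp_neg]
  field_simp

private lemma meanOcc_anti {β : ℝ} (hβ : 0 < β) {a b : ℝ} (ha : 0 < a) (hab : a ≤ b) :
    meanOcc β b ≤ meanOcc β a := by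
  have hb : 0 < b := lt_of_lt_of_le ha hab
  rw [meanOcc_eq hβ ha, meanOcc_eq hβ hb]
  have h1 : 1 < Real.exp (β * a) := by rw [Real.one_lt_exp_iff]; positivity
  have h2 : Real.exp (β * a) ≤ Real.exp (β * b) := by
    apply Real.exp_le_exp.2; nlinarith
  apply inv_anti₀ <;> linarith

/-- Antiderivative of `meanOcc β`. -/
private noncomputable def occG (β ω : ℝ) : ℝ := β⁻¹ * Real.log (1 - Real.exp (-β * ω))

private lemma occG_hasDeriv {β : ℝ} (hβ : 0 < β) {ω : ℝ} (hω : 0 < ω) :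
    HasDerivAt (occG β) (meanOcc β ω) ω := by
  have hlt := exp_neg_lt_one hβ hω
  have hne : 1 - Real.exp (-β * ω) ≠ 0 := by linarith
  have h1 : HasDerivAt (fun x : ℝ => -β * x) (-β) ω := by
    simpa using (hasDerivAt_id ω).const_mul (-β)
  have h2 : HasDerivAt (fun x : ℝ => 1 - Real.exp (-β * x))
      (β * Real.exp (-β * ω)) ω := by
    have := (h1.exp).const_sub 1
    refine this.congr_deriv ?_; ring
  have h3 := ((h2.log hne).const_mul β⁻¹)
  refine h3.congr_deriv ?_
  unfold meanOcc
  field_simp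

private lemma occG_slope {β : ℝ} (hβ : 0 < β) {a b : ℝ} (ha : 0 < a) (hab : a < b) :
    meanOcc β b * (b - a) ≤ occG β b - occG β a ∧
      occG β b - occG β a ≤ meanOcc β a * (b - a) := by
  have hcont : ContinuousOn (occG β) (Set.Icc a b) := fun x hx =>
    ((occG_hasDeriv hβ (lt_of_lt_of_le ha hx.1)).continuousAt).continuousWithinAt
  obtain ⟨c, hc, hslope⟩ := exists_hasDerivAt_eq_slope (occG β) (meanOcc β) hab hcont
    (fun x hx => occG_hasDeriv hβ (lt_of_lt_of_le ha hx.1.le))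
  have hcb : meanOcc β b ≤ meanOcc β c := meanOcc_anti hβ (ha.trans hc.1) hc.2.le
  have hac : meanOcc β c ≤ meanOcc β a := meanOcc_anti hβ ha hc.1.le
  have hba : (0:ℝ) < b - a := by linarith
  have hkey : occG β b - occG β a = meanOcc β c * (b - a) := by
    rw [hslope]; field_simp
  constructor
  · rw [hkey]; nlinarith
  · rw [hkey]; nlinarith

/-- Grid point `ωS + i c / N`. -/
private noncomputable def gridPt (ωS c : ℝ) (N i : ℕ) : ℝ := ωS + (i : ℝ) * c / N

private lemma gridPt_pos {ωS c : ℝ} (hωS : 0 < ωS) (hc : 0 < c) {N : ℕ} (hN : 1 ≤ N)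
    (i : ℕ) : 0 < gridPt ωS c N i := by
  have hNR : (0:ℝ) < N := by exact_mod_cast hN
  have : (0:ℝ) ≤ (i : ℝ) * c / N := by positivity
  unfold gridPt; linarith

private lemma gridPt_step {ωS c : ℝ} {N : ℕ} (hN : 1 ≤ N) (i : ℕ) :
    gridPt ωS c N (i + 1) - gridPt ωS c N i = c / N := by
  have hNR : (0:ℝ) < N := by exact_mod_cast hN
  unfold gridPt; push_cast; field_simp; ring

private lemma gridPt_lt {ωS c : ℝ} (hc : 0 < c) {N : ℕ} (hN : 1 ≤ N) (i : ℕ) :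
    gridPt ωS c N i < gridPt ωS c N (i + 1) := by
  have hNR : (0:ℝ) < N := by exact_mod_cast hN
  have hcN : 0 < c / (N:ℝ) := by positivity
  have := gridPt_step (ωS := ωS) (c := c) hN i
  linarith

private lemma gridPt_zero (ωS c : ℝ) (N : ℕ) : gridPt ωS c N 0 = ωS := by
  simp [gridPt]

private lemma gridPt_last (ωS c : ℝ) {N : ℕ} (hN : 1 ≤ N) :
    gridPt ωS c N N = ωS + c := by
  have hNR : (0:ℝ) < N := by exact_mod_cast hN
  unfold gridPt
  rw [mul_comm, mul_div_assoc, div_self hNR.ne', mul_one]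

end Aux

/-- Gaussian harmonic-oscillator protocol saturates the Landauer limit. -/
theorem gaussian_oscillator_landauer (β ωS ωmax : ℝ)
    (hβ : 0 < β) (hωS : 0 < ωS) (h : ωS < ωmax) :
    Tendsto (fun N : ℕ =>
        ∑ n ∈ Finset.Icc 1 N,
          (ωS + (n : ℝ) * (ωmax - ωS) / N) *
            (meanOcc β (ωS + ((n : ℝ) - 1) * (ωmax - ωS) / N)
              - meanOcc β (ωS + (n : ℝ) * (ωmax - ωS) / N)))
      atTop (nhds ((1 / β) * (oscEntropy β ωS - oscEntropy β ωmax))) := by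
  set c : ℝ := ωmax - ωS with hc
  have hcpos : 0 < c := by rw [hc]; linarith
  have hlast : ∀ {N : ℕ}, 1 ≤ N → gridPt ωS c N N = ωmax := by
    intro N hN; rw [gridPt_last ωS c hN, hc]; ring
  set L : ℝ := occG β ωmax - occG β ωS with hL
  set A : ℝ := ωS * meanOcc β ωS - ωmax * meanOcc β ωmax with hA
  -- the Riemann sum
  set R : ℕ → ℝ := fun N =>
    ∑ i ∈ Finset.range N, (c / N) * meanOcc β (gridPt ωS c N i) with hR
  -- lower and upper bounds on R
  have hRlow : ∀ N : ℕ, 1 ≤ N → L ≤ R N := by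
    intro N hN
    have key : ∀ i ∈ Finset.range N,
        occG β (gridPt ωS c N (i+1)) - occG β (gridPt ωS c N i)
          ≤ (c / N) * meanOcc β (gridPt ωS c N i) := by
      intro i _
      have h2 := (occG_slope hβ (gridPt_pos hωS hcpos hN i) (gridPt_lt hcpos hN i)).2
      rw [gridPt_step hN i] at h2
      linarith [h2, mul_comm (meanOcc β (gridPt ωS c N i)) (c / (N:ℝ))]
    calc L = occG β (gridPt ωS c N N) - occG β (gridPt ωS c N 0) := by
            rw [gridPt_zero, hlast hN]
      _ = ∑ i ∈ Finset.range N,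
            (occG β (gridPt ωS c N (i+1)) - occG β (gridPt ωS c N i)) :=
            (Finset.sum_range_sub (fun i => occG β (gridPt ωS c N i)) N).symm
      _ ≤ R N := Finset.sum_le_sum key
  have hRhigh : ∀ N : ℕ, 1 ≤ N →
      R N ≤ L + (c / N) * (meanOcc β ωS - meanOcc β ωmax) := by
    intro N hN
    have key : ∀ i ∈ Finset.range N,
        (c / N) * meanOcc β (gridPt ωS c N (i+1))
          ≤ occG β (gridPt ωS c N (i+1)) - occG β (gridPt ωS c N i) := by
      intro i _
      have h1 := (occG_slope hβ (gridPt_pos hωS hcpos hN i) (gridPt_lt hcpos hN i)).1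
      rw [gridPt_step hN i] at h1
      linarith [h1, mul_comm (meanOcc β (gridPt ωS c N (i+1))) (c / (N:ℝ))]
    have split : R N = (∑ i ∈ Finset.range N, (c / N) * meanOcc β (gridPt ωS c N (i+1)))
        + (c / N) * (meanOcc β ωS - meanOcc β ωmax) := by
      have htel := Finset.sum_range_sub'
        (fun i => (c / (N:ℝ)) * meanOcc β (gridPt ωS c N i)) N
      have hdist := Finset.sum_sub_distrib (s := Finset.range N)
        (f := fun i => (c / (N:ℝ)) * meanOcc β (gridPt ωS c N i))
        (g := fun i => (c / (N:ℝ)) * meanOcc β (gridPt ωS c N (i+1)))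
      rw [hdist] at htel
      simp only [gridPt_zero, hlast hN] at htel
      rw [hR]
      simp only []
      rw [mul_sub]
      linarith [htel]
    rw [split]
    have hle : (∑ i ∈ Finset.range N, (c / N) * meanOcc β (gridPt ωS c N (i+1)))
        ≤ ∑ i ∈ Finset.range N,
            (occG β (gridPt ωS c N (i+1)) - occG β (gridPt ωS c N i)) :=
      Finset.sum_le_sum key
    rw [Finset.sum_range_sub (fun i => occG β (gridPt ωS c N i)) N,
      gridPt_zero, hlast hN] at hle
    linarith
  -- R tends to L
  have hRL : Tendsto R atTop (nhds L) := by
    apply tendsto_of_tendsto_of_tendsto_of_le_of_le' (g := fun _ : ℕ => L)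
      (h := fun N : ℕ => L + (c * (meanOcc β ωS - meanOcc β ωmax)) / N)
    · exact tendsto_const_nhds
    · have h0 : Tendsto (fun N : ℕ => (c * (meanOcc β ωS - meanOcc β ωmax)) / N)
          atTop (nhds 0) := tendsto_const_div_atTop_nhds_zero_nat _
      simpa using (tendsto_const_nhds (x := L)).add h0
    · filter_upwards [eventually_ge_atTop 1] with N hN using hRlow N hN
    · filter_upwards [eventually_ge_atTop 1] with N hN
      calc R N ≤ L + (c / N) * (meanOcc β ωS - meanOcc β ωmax) := hRhigh N hN
        _ = L + (c * (meanOcc β ωS - meanOcc β ωmax)) / N := by ring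
  -- the sum equals A + R N eventually
  have hsum : ∀ N : ℕ, 1 ≤ N →
      (∑ n ∈ Finset.Icc 1 N,
          (ωS + (n : ℝ) * c / N) *
            (meanOcc β (ωS + ((n : ℝ) - 1) * c / N)
              - meanOcc β (ωS + (n : ℝ) * c / N))) = A + R N := by
    intro N hN
    have step1 : (∑ n ∈ Finset.Icc 1 N,
          (ωS + (n : ℝ) * c / N) *
            (meanOcc β (ωS + ((n : ℝ) - 1) * c / N)
              - meanOcc β (ωS + (n : ℝ) * c / N)))
        = ∑ i ∈ Finset.range N, gridPt ωS c N (i+1) *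
            (meanOcc β (gridPt ωS c N i) - meanOcc β (gridPt ωS c N (i+1))) := by
      rw [← Finset.Ico_add_one_right_eq_Icc, Finset.sum_Ico_eq_sum_range]
      norm_num
      apply Finset.sum_congr rfl
      intro i _
      unfold gridPt
      push_cast
      ring_nf
    have step2 : ∀ i ∈ Finset.range N,
        gridPt ωS c N (i+1) *
            (meanOcc β (gridPt ωS c N i) - meanOcc β (gridPt ωS c N (i+1)))
        = (gridPt ωS c N i * meanOcc β (gridPt ωS c N i)
            - gridPt ωS c N (i+1) * meanOcc β (gridPt ωS c N (i+1)))
          + (c / N) * meanOcc β (gridPt ωS c N i) := by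
      intro i _
      have hs : gridPt ωS c N (i + 1) = gridPt ωS c N i + c / N := by
        have := gridPt_step (ωS := ωS) (c := c) hN i; linarith
      rw [hs]; ring
    rw [step1, Finset.sum_congr rfl step2, Finset.sum_add_distrib,
      Finset.sum_range_sub'
        (fun i => gridPt ωS c N i * meanOcc β (gridPt ωS c N i)) N,
      gridPt_zero, hlast hN]
  -- final identity
  have hfinal : A + L = (1 / β) * (oscEntropy β ωS - oscEntropy β ωmax) := by
    have hne1 : 1 - Real.exp (-β * ωS) ≠ 0 := by
      have := exp_neg_lt_one hβ hωS; linarith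
    have hne2 : 1 - Real.exp (-β * ωmax) ≠ 0 := by
      have := exp_neg_lt_one hβ (hωS.trans h); linarith
    rw [hA, hL]
    unfold meanOcc oscEntropy occG
    field_simp
    ring
  rw [← hfinal]
  have hAR := (tendsto_const_nhds (x := A) (f := atTop (α := ℕ))).add hRL
  apply hAR.congr'
  filter_upwards [eventually_ge_atTop 1] with N hN
  exact (hsum N hN).symm
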